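/- For each j, let E_j : [1,2] → ℝ be nonincreasing and C¹, with γj ≤ E_j(t) ≤ Γj for all t and j (0 < γ ≤ Γ). Let G ⊆ [1,2] be measurable and suppose that for all t ∈ G and all j with n²/(2Γ) ≤ j ≤ 3n²/(2γ) one has E_j'(t) ≤ -(c/4)E_j(t). Then for n² ≥ 2a, ∑_{n²/(2Γ) ≤ j ≤ 3n²/(2γ)} |{t ∈ G : E_j(t) ∈ [n²-a, n²+a)}| ≤ 24a/(cγ). -/

import Mathlib

open MeasureTheory Set Filter

/-- Derivative of a function antitone on `[1,2]` at an interior point is nonpositive. -/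
lemma deriv_nonpos_of_antitoneOn' {E : ℝ → ℝ} {d t : ℝ}
    (hm : AntitoneOn E (Set.Icc 1 2)) (ht : t ∈ Set.Ioo (1:ℝ) 2)
    (hd : HasDerivAt E d t) : d ≤ 0 := by
  have h := hasDerivAt_iff_tendsto_slope.1 hd
  have h2 : Tendsto (slope E t) (nhdsWithin t (Set.Ioi t)) (nhds d) :=
    h.mono_left (nhdsWithin_mono t (by intro x hx; exact ne_of_gt hx))
  refine le_of_tendsto h2 ?_
  filter_upwards [Ioo_mem_nhdsGT_of_mem ⟨le_refl t, ht.2⟩] with x hx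
  have hxI : x ∈ Set.Icc (1:ℝ) 2 := ⟨le_of_lt (lt_trans ht.1 hx.1), le_of_lt hx.2⟩
  have htI : t ∈ Set.Icc (1:ℝ) 2 := ⟨le_of_lt ht.1, le_of_lt ht.2⟩
  have : E x ≤ E t := hm htI hxI (le_of_lt hx.1)
  rw [slope_def_field]
  exact div_nonpos_of_nonpos_of_nonneg (by linarith) (by linarith [hx.1])

/-- Key quantitative lemma: if a `C¹` antitone function decreases at rate at least `K`
on a set `S` where its values lie in the window `[L, U)`, then `|S| ≤ (U-L)/K`. -/
lemma key_measure_bound (E E' : ℝ → ℝ)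
    (hd : ∀ t ∈ Set.Icc (1:ℝ) 2, HasDerivAt E (E' t) t)
    (hc : ContinuousOn E' (Set.Icc 1 2))
    (hm : AntitoneOn E (Set.Icc 1 2))
    (S : Set ℝ) (hS : MeasurableSet S) (hSsub : S ⊆ Set.Icc 1 2)
    (L U K : ℝ) (hK : 0 < K)
    (hE : ∀ t ∈ S, E t ∈ Set.Ico L U)
    (hd' : ∀ t ∈ S, E' t ≤ -K) :
    volume S ≤ ENNReal.ofReal ((U - L)/K) := by
  rcases S.eq_empty_or_nonempty with rfl | hne
  · simp
  have hbdd : BddBelow S := (isCompact_Icc.bddBelow).mono hSsub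
  have hbdd2 : BddAbove S := (isCompact_Icc.bddAbove).mono hSsub
  set p := sInf S with hp
  set q := sSup S with hq
  have hpq : p ≤ q := Real.sInf_le_sSup S hbdd hbdd2
  have hpcl : p ∈ closure S := csInf_mem_closure hne hbdd
  have hqcl : q ∈ closure S := csSup_mem_closure hne hbdd2
  have hclsub : closure S ⊆ Set.Icc 1 2 := closure_minimal hSsub isClosed_Icc
  have hpI : p ∈ Set.Icc (1:ℝ) 2 := hclsub hpcl
  have hqI : q ∈ Set.Icc (1:ℝ) 2 := hclsub hqcl
  have hSpq : S ⊆ Set.Icc p q := fun x hx => ⟨csInf_le hbdd hx, le_csSup hbdd2 hx⟩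
  have hEcont : ContinuousOn E (Set.Icc 1 2) := fun x hx =>
    (hd x hx).continuousAt.continuousWithinAt
  have hnbp : (nhdsWithin p S).NeBot := mem_closure_iff_nhdsWithin_neBot.1 hpcl
  have hEpU : E p ≤ U := by
    have : Tendsto E (nhdsWithin p S) (nhds (E p)) :=
      ((hEcont p hpI).mono hSsub).tendsto
    exact le_of_tendsto this (eventually_nhdsWithin_of_forall fun x hx => (hE x hx).2.le)
  have hnbq : (nhdsWithin q S).NeBot := mem_closure_iff_nhdsWithin_neBot.1 hqcl
  have hEqL : L ≤ E q := by
    have : Tendsto E (nhdsWithin q S) (nhds (E q)) :=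
      ((hEcont q hqI).mono hSsub).tendsto
    exact ge_of_tendsto this (eventually_nhdsWithin_of_forall fun x hx => (hE x hx).1)
  have hIpq : Set.Icc p q ⊆ Set.Icc (1:ℝ) 2 := Set.Icc_subset_Icc hpI.1 hqI.2
  have hInt : IntegrableOn (fun t => -E' t) (Set.Icc p q) volume :=
    ((hc.mono hIpq).neg.integrableOn_compact isCompact_Icc)
  have hIntS : IntegrableOn (fun t => -E' t) S volume :=
    hInt.mono_set hSpq
  have hae : 0 ≤ᵐ[volume.restrict (Set.Icc p q)] fun t => -E' t := by
    rw [← Measure.restrict_congr_set Ioo_ae_eq_Icc]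
    filter_upwards [ae_restrict_mem measurableSet_Ioo] with t ht
    have htI : t ∈ Set.Ioo (1:ℝ) 2 := ⟨lt_of_le_of_lt hpI.1 ht.1, lt_of_lt_of_le ht.2 hqI.2⟩
    have := deriv_nonpos_of_antitoneOn' hm htI (hd t (Set.Ioo_subset_Icc_self htI))
    simpa using this
  have hSfin : volume S ≠ ⊤ := by
    have : volume S ≤ volume (Set.Icc (1:ℝ) 2) := measure_mono hSsub
    exact ne_top_of_le_ne_top (by simp [Real.volume_Icc]) this
  have h1 : K * (volume S).toReal ≤ ∫ t in S, -E' t :=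
    setIntegral_ge_of_const_le_real hS hSfin (fun x hx => by linarith [hd' x hx]) hIntS
  have h2 : ∫ t in S, -E' t ≤ ∫ t in Set.Icc p q, -E' t :=
    setIntegral_mono_set hInt hae (HasSubset.Subset.eventuallyLE hSpq)
  have h3 : ∫ t in Set.Icc p q, -E' t = E p - E q := by
    rw [MeasureTheory.integral_Icc_eq_integral_Ioc, ← intervalIntegral.integral_of_le hpq]
    have hiint : IntervalIntegrable E' volume p q := by
      apply ContinuousOn.intervalIntegrable
      rw [Set.uIcc_of_le hpq]
      exact hc.mono hIpq
    rw [intervalIntegral.integral_neg]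
    rw [intervalIntegral.integral_eq_sub_of_hasDerivAt
      (fun t ht => hd t (hIpq (by rwa [Set.uIcc_of_le hpq] at ht))) hiint]
    ring
  have h4 : K * (volume S).toReal ≤ U - L := by
    calc K * (volume S).toReal ≤ E p - E q := by linarith
    _ ≤ U - L := by linarith
  have h5 : (volume S).toReal ≤ (U - L)/K := by
    rw [le_div_iff₀ hK]; linarith [h4]
  calc volume S = ENNReal.ofReal (volume S).toReal := (ENNReal.ofReal_toReal hSfin).symm
  _ ≤ ENNReal.ofReal ((U - L)/K) := ENNReal.ofReal_le_ofReal h5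

/-- For nonincreasing `C¹` eigenvalue branches `E_j` on `[1,2]` with `γj ≤ E_j ≤ Γj`,
if `E_j' ≤ -(c/4)E_j` on a measurable `G ⊆ [1,2]` for all `j` with
`n²/(2Γ) ≤ j ≤ 3n²/(2γ)`, then
`∑_{n²/(2Γ) ≤ j ≤ 3n²/(2γ)} |{t ∈ G : E_j(t) ∈ [n²-a, n²+a)}| ≤ 24a/(cγ)`. -/
theorem stmt11 (γ Γ c a : ℝ) (hγ : 0 < γ) (hγΓ : γ ≤ Γ) (hc : 0 < c) (ha : 0 < a)
    (n : ℕ) (hna : 2 * a ≤ (n : ℝ) ^ 2)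
    (E E' : ℕ → ℝ → ℝ)
    (hderiv : ∀ j : ℕ, ∀ t ∈ Set.Icc (1 : ℝ) 2, HasDerivAt (E j) (E' j t) t)
    (hcont : ∀ j : ℕ, ContinuousOn (E' j) (Set.Icc 1 2))
    (hmono : ∀ j : ℕ, AntitoneOn (E j) (Set.Icc 1 2))
    (hbound : ∀ j : ℕ, 1 ≤ j → ∀ t ∈ Set.Icc (1 : ℝ) 2, γ * j ≤ E j t ∧ E j t ≤ Γ * j)
    (G : Set ℝ) (hG : MeasurableSet G) (hGsub : G ⊆ Set.Icc 1 2)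
    (hineq : ∀ t ∈ G, ∀ j : ℕ, (n : ℝ) ^ 2 / (2 * Γ) ≤ (j : ℝ) →
      (j : ℝ) ≤ 3 * (n : ℝ) ^ 2 / (2 * γ) → E' j t ≤ -(c / 4) * E j t) :
    ∑ j ∈ Finset.Icc ⌈(n : ℝ) ^ 2 / (2 * Γ)⌉₊ ⌊3 * (n : ℝ) ^ 2 / (2 * γ)⌋₊,
      volume {t ∈ G | E j t ∈ Set.Ico ((n : ℝ) ^ 2 - a) ((n : ℝ) ^ 2 + a)}
      ≤ ENNReal.ofReal (24 * a / (c * γ)) := by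
  have hΓ : 0 < Γ := lt_of_lt_of_le hγ hγΓ
  have hN : (0:ℝ) < (n:ℝ)^2 := by nlinarith
  set N : ℝ := (n:ℝ)^2 with hNdef
  set L : ℝ := N - a with hL
  set U : ℝ := N + a with hU
  set K : ℝ := c * N / 8 with hKdef
  have hK : 0 < K := by positivity
  set m := ⌈N / (2 * Γ)⌉₊ with hm
  set M := ⌊3 * N / (2 * γ)⌋₊ with hM
  -- per-j bound
  have hper : ∀ j ∈ Finset.Icc m M,
      volume {t ∈ G | E j t ∈ Set.Ico L U} ≤ ENNReal.ofReal ((U - L)/K) := by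
    intro j hj
    rw [Finset.mem_Icc] at hj
    have hj1 : N / (2 * Γ) ≤ (j:ℝ) := by
      have := Nat.ceil_le.1 hj.1
      exact this
    have hj2 : (j:ℝ) ≤ 3 * N / (2 * γ) := by
      have h1 : (j:ℝ) ≤ (M:ℝ) := by exact_mod_cast hj.2
      have h2 : (M:ℝ) ≤ 3 * N / (2 * γ) := Nat.floor_le (by positivity)
      linarith
    set S := {t ∈ G | E j t ∈ Set.Ico L U} with hSdef
    have hSsub : S ⊆ Set.Icc (1:ℝ) 2 := fun t ht => hGsub ht.1
    -- measurability via ord-connectedness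
    set W := {t ∈ Set.Icc (1:ℝ) 2 | E j t ∈ Set.Ico L U} with hW
    have hWoc : W.OrdConnected := by
      constructor
      intro x hx y hy t ht
      have hxI := hx.1; have hyI := hy.1
      have htI : t ∈ Set.Icc (1:ℝ) 2 := ⟨le_trans hxI.1 ht.1, le_trans ht.2 hyI.2⟩
      refine ⟨htI, ?_, ?_⟩
      · exact le_trans hy.2.1 (hmono j htI hyI ht.2)
      · exact lt_of_le_of_lt (hmono j hxI htI ht.1) hx.2.2
    have hSW : S = G ∩ W := by
      ext t
      constructor
      · intro ht; exact ⟨ht.1, hGsub ht.1, ht.2⟩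
      · intro ht; exact ⟨ht.1, ht.2.2⟩
    have hSmeas : MeasurableSet S := by
      rw [hSW]; exact hG.inter hWoc.measurableSet
    have hEmem : ∀ t ∈ S, E j t ∈ Set.Ico L U := fun t ht => ht.2
    have hd' : ∀ t ∈ S, E' j t ≤ -K := by
      intro t ht
      have h1 := hineq t ht.1 j hj1 hj2
      have h2 : L ≤ E j t := (ht.2).1
      have h3 : N / 2 ≤ E j t := by
        rw [hL] at h2; linarith [hna]
      have : (c/4) * (N/2) ≤ (c/4) * E j t :=
        mul_le_mul_of_nonneg_left h3 (by positivity)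
      rw [hKdef]
      linarith
    exact key_measure_bound (E j) (E' j) (hderiv j) (hcont j) (hmono j) S hSmeas hSsub
      L U K hK hEmem hd'
  -- sum the constant bound
  have hsum : ∑ j ∈ Finset.Icc m M,
      volume {t ∈ G | E j t ∈ Set.Ico L U}
      ≤ (Finset.Icc m M).card • ENNReal.ofReal ((U - L)/K) := by
    rw [← Finset.sum_const]
    exact Finset.sum_le_sum hper
  refine le_trans hsum ?_
  -- cardinality bound
  have hm1 : 1 ≤ m := by
    rw [hm]
    exact Nat.one_le_iff_ne_zero.2 (by
      simp only [ne_eq, Nat.ceil_eq_zero, not_le]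
      positivity)
  have hcard : (Finset.Icc m M).card ≤ M := by
    rw [Nat.card_Icc]
    omega
  have hMle : (M:ℝ) ≤ 3 * N / (2 * γ) := Nat.floor_le (by positivity)
  have hcardR : ((Finset.Icc m M).card : ℝ) ≤ 3 * N / (2 * γ) := by
    have : ((Finset.Icc m M).card : ℝ) ≤ (M:ℝ) := by exact_mod_cast hcard
    linarith
  -- convert smul to ofReal and finish with a real inequality
  have hULK : (0:ℝ) ≤ (U - L)/K := by
    have : U - L = 2 * a := by rw [hU, hL]; ring
    rw [this]; positivity
  rw [nsmul_eq_mul, ← ENNReal.ofReal_natCast, ← ENNReal.ofReal_mul (by positivity)]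
  apply ENNReal.ofReal_le_ofReal
  have hreal : ((Finset.Icc m M).card : ℝ) * ((U - L)/K) ≤ (3 * N / (2 * γ)) * ((U - L)/K) :=
    mul_le_mul_of_nonneg_right hcardR hULK
  refine le_trans hreal (le_of_eq ?_)
  have hUL : U - L = 2 * a := by rw [hU, hL]; ring
  rw [hUL, hKdef]
  field_simp
  ring
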